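/- There exists a finite 3-player game G and no-regret strategies σ_1, σ_2 for the two learners such that for every strategy of the optimizer (player 3, who has a single action), the optimizer's expected average utility is 0, strictly less than the pure optimistic Stackelberg value V_pure = 1 of G. Concretely, in the game with A_1 = {T,B}, A_2 = {L,R}, A_3 = {E} and payoffs u(T,L) = (1,1,0), u(T,R) = (0,0,0), u(B,L) = (0,0,−1), u(B,R) = (1,1,1), the learners' strategies from the regret-matching construction (starting at T and L, breaking ties toward T and L) play (T,L) at every stage, giving the optimizer average utility 0 while V_pure = 1. -/

import Mathlib

open MeasureTheory Filter Finset

noncomputable section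

/-- Learners' coordination utility in the game of Counterexample 1:
payoff 1 on (T,L) and (B,R), else 0. `T`,`L` are `true`; `B`,`R` are `false`. -/
def uL (a b : Bool) : ℝ := if a = b then 1 else 0

/-- Optimizer's utility: `u3(T,L)=0, u3(T,R)=0, u3(B,L)=-1, u3(B,R)=1`. -/
def u3 (p : Bool × Bool) : ℝ :=
  if p = (false, false) then 1 else if p = (false, true) then -1 else 0

/-- `r̄ᵗ_{T,B}` of player 1 from a history of length `t`. -/
def rTB {t : ℕ} (h : Fin t → Bool × Bool) : ℝ :=
  (∑ m, if (h m).1 = true then (if (h m).2 = false then (1 : ℝ) else -1) else 0) / t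

/-- `r̄ᵗ_{B,T}` of player 1. -/
def rBT {t : ℕ} (h : Fin t → Bool × Bool) : ℝ :=
  (∑ m, if (h m).1 = false then (if (h m).2 = true then (1 : ℝ) else -1) else 0) / t

/-- `r̄ᵗ_{L,R}` of player 2. -/
def rLR {t : ℕ} (h : Fin t → Bool × Bool) : ℝ :=
  (∑ m, if (h m).2 = true then (if (h m).1 = false then (1 : ℝ) else -1) else 0) / t

/-- `r̄ᵗ_{R,L}` of player 2. -/
def rRL {t : ℕ} (h : Fin t → Bool × Bool) : ℝ :=
  (∑ m, if (h m).2 = false then (if (h m).1 = true then (1 : ℝ) else -1) else 0) / t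

/-- Player 1's regret-matching strategy, starting with `T` and breaking
arbitrary choices towards `T` (`p = 1`). -/
def P1 (t : ℕ) (h : Fin t → Bool × Bool) : ℝ :=
  if max (rTB h) 0 + max (rBT h) 0 = 0 then 1
  else max (rBT h) 0 / (max (rTB h) 0 + max (rBT h) 0)

/-- Player 2's regret-matching strategy, starting with `L` and breaking
arbitrary choices towards `L` (`p = 1`). -/
def P2 (t : ℕ) (h : Fin t → Bool × Bool) : ℝ :=
  if max (rLR h) 0 + max (rRL h) 0 = 0 then 1
  else max (rRL h) 0 / (max (rLR h) 0 + max (rRL h) 0)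

/-- `play` is consistent with player 1 following `σ` (probability of `T`). -/
def Follows1 {Ω : Type} [MeasurableSpace Ω] (μ : Measure Ω)
    (play : ℕ → Ω → Bool × Bool)
    (σ : (t : ℕ) → (Fin t → Bool × Bool) → ℝ) : Prop :=
  ∀ (t : ℕ) (f : (Fin t → Bool × Bool) → Bool → ℝ),
    ∫ ω, (if (play t ω).1 = true then (1 : ℝ) else 0) *
        f (fun s => play s.1 ω) (play t ω).2 ∂μ
      = ∫ ω, σ t (fun s => play s.1 ω) * f (fun s => play s.1 ω) (play t ω).2 ∂μ

/-- `play` is consistent with player 2 following `σ` (probability of `L`). -/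
def Follows2 {Ω : Type} [MeasurableSpace Ω] (μ : Measure Ω)
    (play : ℕ → Ω → Bool × Bool)
    (σ : (t : ℕ) → (Fin t → Bool × Bool) → ℝ) : Prop :=
  ∀ (t : ℕ) (f : (Fin t → Bool × Bool) → Bool → ℝ),
    ∫ ω, (if (play t ω).2 = true then (1 : ℝ) else 0) *
        f (fun s => play s.1 ω) (play t ω).1 ∂μ
      = ∫ ω, σ t (fun s => play s.1 ω) * f (fun s => play s.1 ω) (play t ω).1 ∂μ

/-- A strategy `σ` of player 1 has no (external) regret: against every opposing
behavior, the positive part of the average external regret vanishes a.s. -/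
def NoRegret1 (σ : (t : ℕ) → (Fin t → Bool × Bool) → ℝ) : Prop :=
  ∀ (Ω : Type) (_ : MeasurableSpace Ω) (μ : Measure Ω), IsProbabilityMeasure μ →
    ∀ play : ℕ → Ω → Bool × Bool, (∀ t, Measurable (play t)) →
      Follows1 μ play σ →
      ∀ b : Bool, ∀ᵐ ω ∂μ, Tendsto
        (fun M : ℕ => max ((∑ t ∈ Finset.range M,
          (uL b (play t ω).2 - uL (play t ω).1 (play t ω).2)) / M) 0)
        atTop (nhds 0)

/-- Same for player 2. -/
def NoRegret2 (σ : (t : ℕ) → (Fin t → Bool × Bool) → ℝ) : Prop :=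
  ∀ (Ω : Type) (_ : MeasurableSpace Ω) (μ : Measure Ω), IsProbabilityMeasure μ →
    ∀ play : ℕ → Ω → Bool × Bool, (∀ t, Measurable (play t)) →
      Follows2 μ play σ →
      ∀ b : Bool, ∀ᵐ ω ∂μ, Tendsto
        (fun M : ℕ => max ((∑ t ∈ Finset.range M,
          (uL (play t ω).1 b - uL (play t ω).1 (play t ω).2)) / M) 0)
        atTop (nhds 0)

namespace CE

/-! ### Auxiliary algebra -/

lemma max_div_zero (x : ℝ) {c : ℝ} (hc : 0 ≤ c) : max (x / c) 0 = max x 0 / c := by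
  rw [← max_div_div_right hc x 0, zero_div]

def gTB {t : ℕ} (h : Fin t → Bool × Bool) : ℝ :=
  ∑ m, if (h m).1 = true then (if (h m).2 = false then (1 : ℝ) else -1) else 0

def gBT {t : ℕ} (h : Fin t → Bool × Bool) : ℝ :=
  ∑ m, if (h m).1 = false then (if (h m).2 = true then (1 : ℝ) else -1) else 0

lemma rTB_eq {t : ℕ} (h : Fin t → Bool × Bool) : rTB h = gTB h / t := rfl
lemma rBT_eq {t : ℕ} (h : Fin t → Bool × Bool) : rBT h = gBT h / t := rfl

/-- The defining property of regret matching. -/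
lemma P1_mul {t : ℕ} (h : Fin t → Bool × Bool) :
    P1 t h * (max (gTB h) 0 + max (gBT h) 0) = max (gBT h) 0 := by
  have ht0 : (0:ℝ) ≤ (t:ℝ) := Nat.cast_nonneg t
  have hA : max (rTB h) 0 = max (gTB h) 0 / t := by
    rw [rTB_eq, max_div_zero _ ht0]
  have hB : max (rBT h) 0 = max (gBT h) 0 / t := by
    rw [rBT_eq, max_div_zero _ ht0]
  set a := max (gTB h) 0 with ha
  set b := max (gBT h) 0 with hb
  have ha0 : 0 ≤ a := le_max_right _ _
  have hb0 : 0 ≤ b := le_max_right _ _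
  rcases Nat.eq_zero_or_pos t with h0 | hpos
  · subst h0
    have ha' : a = 0 := by simp [ha, gTB]
    have hb' : b = 0 := by simp [hb, gBT]
    simp [P1, ha', hb', hA, hB]
  · have htpos : (0:ℝ) < (t:ℝ) := by exact_mod_cast hpos
    by_cases hab : a + b = 0
    · have ha' : a = 0 := by linarith
      have hb' : b = 0 := by linarith
      simp [P1, hA, hB, ha', hb']
    · have hcond : max (rTB h) 0 + max (rBT h) 0 ≠ 0 := by
        rw [hA, hB, ← add_div]
        exact div_ne_zero hab (ne_of_gt htpos)
      rw [P1, if_neg hcond, hA, hB, ← add_div]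
      rw [div_div_div_cancel_right₀]
      · exact div_mul_cancel₀ b hab
      · exact ne_of_gt htpos

end CE
namespace CE

section Traj
variable {Ω : Type} [MeasurableSpace Ω]

def inc1 (p : Bool × Bool) : ℝ := if p.1 = true then (if p.2 = false then 1 else -1) else 0
def inc2 (p : Bool × Bool) : ℝ := if p.1 = false then (if p.2 = true then 1 else -1) else 0

lemma abs_inc1 (p : Bool × Bool) : |inc1 p| ≤ 1 := by
  rcases p with ⟨x, y⟩; cases x <;> cases y <;> simp [inc1]

lemma abs_inc2 (p : Bool × Bool) : |inc2 p| ≤ 1 := by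
  rcases p with ⟨x, y⟩; cases x <;> cases y <;> simp [inc2]

variable (play : ℕ → Ω → Bool × Bool)

def C1 (t : ℕ) (ω : Ω) : ℝ := ∑ m ∈ Finset.range t, inc1 (play m ω)
def C2 (t : ℕ) (ω : Ω) : ℝ := ∑ m ∈ Finset.range t, inc2 (play m ω)

lemma C1_eq (t : ℕ) (ω : Ω) : C1 play t ω = gTB (fun s : Fin t => play s.1 ω) := by
  rw [C1, gTB, ← Fin.sum_univ_eq_sum_range (fun m => inc1 (play m ω)) t]
  rfl

lemma C2_eq (t : ℕ) (ω : Ω) : C2 play t ω = gBT (fun s : Fin t => play s.1 ω) := by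
  rw [C2, gBT, ← Fin.sum_univ_eq_sum_range (fun m => inc2 (play m ω)) t]
  rfl

lemma meas_comp (t : ℕ) (hm : ∀ s, Measurable (play s))
    (φ : (Fin t → Bool × Bool) × (Bool × Bool) → ℝ) :
    Measurable (fun ω => φ (fun s : Fin t => play s.1 ω, play t ω)) :=
  Measurable.of_discrete.comp
    ((measurable_pi_lambda _ fun s : Fin t => hm s.1).prodMk (hm t))

lemma int_comp (μ : Measure Ω) [IsProbabilityMeasure μ] (t : ℕ)
    (hm : ∀ s, Measurable (play s))
    (φ : (Fin t → Bool × Bool) × (Bool × Bool) → ℝ) :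
    Integrable (fun ω => φ (fun s : Fin t => play s.1 ω, play t ω)) μ := by
  obtain ⟨M, hM⟩ := Finite.exists_le (fun p => |φ p|)
  exact Integrable.mono' (integrable_const M)
    (meas_comp play t hm φ).aestronglyMeasurable
    (ae_of_all _ fun ω => by simpa [Real.norm_eq_abs] using hM _)

def Dfn (t : ℕ) (ω : Ω) : ℝ :=
  max (C1 play t ω) 0 * inc1 (play t ω) + max (C2 play t ω) 0 * inc2 (play t ω)

def Zfn (t : ℕ) (ω : Ω) : ℝ := (max (C1 play t ω) 0)^2 + (max (C2 play t ω) 0)^2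

omit [MeasurableSpace Ω] in
lemma Z_step (t : ℕ) (ω : Ω) :
    Zfn play (t+1) ω ≤ Zfn play t ω + 2 * Dfn play t ω + 2 := by
  have key : ∀ c i : ℝ, |i| ≤ 1 →
      (max (c+i) 0)^2 ≤ (max c 0)^2 + 2 * (max c 0 * i) + 1 := by
    intro c i hi
    have h1 : max (c+i) 0 ≤ |max c 0 + i| :=
      max_le ((add_le_add (le_max_left c 0) (le_refl i)).trans (le_abs_self _))
        (abs_nonneg _)
    have h2 := sq_le_sq'
      ((neg_nonpos_of_nonneg (abs_nonneg _)).trans (le_max_right (c+i) 0)) h1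
    rw [sq_abs] at h2
    nlinarith [abs_le.1 hi]
  have e1 : C1 play (t+1) ω = C1 play t ω + inc1 (play t ω) :=
    Finset.sum_range_succ _ _
  have e2 : C2 play (t+1) ω = C2 play t ω + inc2 (play t ω) :=
    Finset.sum_range_succ _ _
  have k1 := key (C1 play t ω) (inc1 (play t ω)) (abs_inc1 _)
  have k2 := key (C2 play t ω) (inc2 (play t ω)) (abs_inc2 _)
  simp only [Zfn, Dfn, e1, e2]
  linarith

end Traj
end CE
namespace CE
section Expect
variable {Ω : Type} [MeasurableSpace Ω] (play : ℕ → Ω → Bool × Bool)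
  (μ : MeasureTheory.Measure Ω) [MeasureTheory.IsProbabilityMeasure μ]
  (hm : ∀ s, Measurable (play s))
include hm

lemma int_Dfn (hF : Follows1 μ play P1) (t : ℕ) : ∫ ω, Dfn play t ω ∂μ = 0 := by
  set f : (Fin t → Bool × Bool) → Bool → ℝ :=
    fun h y => (max (gTB h) 0 + max (gBT h) 0) * (if y = false then 1 else -1) with hf
  have key : ∀ ω, Dfn play t ω =
      (if (play t ω).1 = true then (1:ℝ) else 0) * f (fun s : Fin t => play s.1 ω) (play t ω).2
      - max (gBT (fun s : Fin t => play s.1 ω)) 0 *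
          (if (play t ω).2 = false then 1 else -1) := by
    intro ω
    rcases hx : (play t ω) with ⟨x, y⟩
    have hc1 := C1_eq play t ω
    have hc2 := C2_eq play t ω
    cases x <;> cases y <;>
      simp [Dfn, inc1, inc2, hf, hx, hc1, hc2] <;> ring
  have hint1 : MeasureTheory.Integrable (fun ω =>
      (if (play t ω).1 = true then (1:ℝ) else 0) *
        f (fun s : Fin t => play s.1 ω) (play t ω).2) μ :=
    int_comp play μ t hm (fun q => (if q.2.1 = true then (1:ℝ) else 0) * f q.1 q.2.2)
  have hint2 : MeasureTheory.Integrable (fun ω =>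
      max (gBT (fun s : Fin t => play s.1 ω)) 0 *
        (if (play t ω).2 = false then (1:ℝ) else -1)) μ :=
    int_comp play μ t hm (fun q => max (gBT q.1) 0 * (if q.2.2 = false then (1:ℝ) else -1))
  calc ∫ ω, Dfn play t ω ∂μ
      = ∫ ω, ((if (play t ω).1 = true then (1:ℝ) else 0) *
            f (fun s : Fin t => play s.1 ω) (play t ω).2
          - max (gBT (fun s : Fin t => play s.1 ω)) 0 *
            (if (play t ω).2 = false then 1 else -1)) ∂μ :=
        MeasureTheory.integral_congr_ae (ae_of_all _ key)
    _ = (∫ ω, (if (play t ω).1 = true then (1:ℝ) else 0) *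
            f (fun s : Fin t => play s.1 ω) (play t ω).2 ∂μ)
        - ∫ ω, max (gBT (fun s : Fin t => play s.1 ω)) 0 *
            (if (play t ω).2 = false then (1:ℝ) else -1) ∂μ :=
        MeasureTheory.integral_sub hint1 hint2
    _ = (∫ ω, P1 t (fun s : Fin t => play s.1 ω) *
            f (fun s : Fin t => play s.1 ω) (play t ω).2 ∂μ)
        - ∫ ω, max (gBT (fun s : Fin t => play s.1 ω)) 0 *
            (if (play t ω).2 = false then (1:ℝ) else -1) ∂μ := by rw [hF t f]
    _ = 0 := by
        rw [sub_eq_zero]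
        apply MeasureTheory.integral_congr_ae (ae_of_all _ _)
        intro ω
        show P1 t (fun s : Fin t => play s.1 ω) * f (fun s : Fin t => play s.1 ω) (play t ω).2
          = max (gBT (fun s : Fin t => play s.1 ω)) 0 * (if (play t ω).2 = false then 1 else -1)
        rw [hf]
        dsimp only
        rw [← mul_assoc, P1_mul]

lemma int_Zfn_le (hF : Follows1 μ play P1) (t : ℕ) :
    ∫ ω, Zfn play t ω ∂μ ≤ 2 * t := by
  induction t with
  | zero => simp [Zfn, C1, C2]
  | succ n ih =>
    have hZ : ∀ u : ℕ, MeasureTheory.Integrable (Zfn play u) μ := by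
      intro u
      have heq : Zfn play u = fun ω =>
          (max (gTB (fun s : Fin u => play s.1 ω)) 0)^2 +
          (max (gBT (fun s : Fin u => play s.1 ω)) 0)^2 := by
        funext ω; rw [Zfn, C1_eq, C2_eq]
      rw [heq]
      exact int_comp play μ u hm (fun q => (max (gTB q.1) 0)^2 + (max (gBT q.1) 0)^2)
    have hD : MeasureTheory.Integrable (Dfn play n) μ := by
      have heq : Dfn play n = fun ω =>
          max (gTB (fun s : Fin n => play s.1 ω)) 0 * inc1 (play n ω) +
          max (gBT (fun s : Fin n => play s.1 ω)) 0 * inc2 (play n ω) := by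
        funext ω; rw [Dfn, C1_eq, C2_eq]
      rw [heq]
      exact int_comp play μ n hm (fun q => max (gTB q.1) 0 * inc1 q.2 + max (gBT q.1) 0 * inc2 q.2)
    have hint_a : MeasureTheory.Integrable
        (fun ω => Zfn play n ω + 2 * Dfn play n ω) μ := (hZ n).add (hD.const_mul 2)
    have hint_b : MeasureTheory.Integrable
        (fun ω => Zfn play n ω + 2 * Dfn play n ω + 2) μ :=
      hint_a.add (MeasureTheory.integrable_const 2)
    have hmono := MeasureTheory.integral_mono (hZ (n+1)) hint_b
      (fun ω => Z_step play n ω)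
    have hval : ∫ ω, (Zfn play n ω + 2 * Dfn play n ω + 2) ∂μ
        = (∫ ω, Zfn play n ω ∂μ) + 2 * (∫ ω, Dfn play n ω ∂μ) + 2 := by
      rw [MeasureTheory.integral_add hint_a (MeasureTheory.integrable_const 2),
        MeasureTheory.integral_add (hZ n) (hD.const_mul 2),
        MeasureTheory.integral_const_mul]
      simp
    rw [hval, int_Dfn play μ hm hF n] at hmono
    push_cast
    linarith

end Expect
end CE
namespace CE

lemma nat_sqrt_atTop : Filter.Tendsto Nat.sqrt Filter.atTop Filter.atTop :=
  Filter.tendsto_atTop_atTop.2 fun b => ⟨b*b, fun _ ha => Nat.le_sqrt.2 ha⟩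

lemma as_conv {Ω : Type} [MeasurableSpace Ω] (μ : MeasureTheory.Measure Ω)
    [MeasureTheory.IsProbabilityMeasure μ] (C : ℕ → Ω → ℝ)
    (hmeas : ∀ t, Measurable (C t))
    (hint : ∀ t, MeasureTheory.Integrable (fun ω => (max (C t ω) 0)^2) μ)
    (hstep : ∀ t ω, |C (t+1) ω - C t ω| ≤ 1)
    (hbound : ∀ t : ℕ, ∫ ω, (max (C t ω) 0)^2 ∂μ ≤ 2 * t) :
    ∀ᵐ ω ∂μ, Filter.Tendsto (fun M : ℕ => max (C M ω) 0 / M)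
      Filter.atTop (nhds 0) := by
  classical
  set q : ℕ → Ω → ℝ := fun k ω => max (C ((k+1)^2) ω) 0 / ((k:ℝ)+1)^2 with hq
  have hq0 : ∀ k ω, 0 ≤ q k ω := fun k ω =>
    div_nonneg (le_max_right _ _) (by positivity)
  set W : ℕ → Ω → ENNReal := fun k ω => ENNReal.ofReal ((q k ω)^2) with hW
  have hWm : ∀ k, Measurable (W k) := by
    intro k
    exact ENNReal.measurable_ofReal.comp
      ((((hmeas _).max measurable_const).div_const _).pow_const 2)
  have hcast : ∀ k : ℕ, (((k+1)^2 : ℕ) : ℝ) = ((k:ℝ)+1)^2 := by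
    intro k; push_cast; ring
  have hWint : ∀ k, ∫⁻ ω, W k ω ∂μ ≤ ENNReal.ofReal (2 / ((k:ℝ)+1)^2) := by
    intro k
    have hqint : MeasureTheory.Integrable (fun ω => (q k ω)^2) μ := by
      simpa only [hq, div_pow] using (hint ((k+1)^2)).div_const ((((k:ℝ)+1)^2)^2)
    rw [hW, ← MeasureTheory.ofReal_integral_eq_lintegral_ofReal hqint
      (ae_of_all _ fun ω => sq_nonneg _)]
    apply ENNReal.ofReal_le_ofReal
    have heval : ∫ ω, (q k ω)^2 ∂μ
        = (∫ ω, (max (C ((k+1)^2) ω) 0)^2 ∂μ) / (((k:ℝ)+1)^2)^2 := by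
      simp only [hq, div_pow, MeasureTheory.integral_div]
    rw [heval]
    have hb : ∫ ω, (max (C ((k+1)^2) ω) 0)^2 ∂μ ≤ 2 * ((k:ℝ)+1)^2 := by
      have := hbound ((k+1)^2)
      rwa [hcast k] at this
    have hpos : (0:ℝ) < ((k:ℝ)+1)^2 := by positivity
    rw [div_le_div_iff₀ (by positivity) hpos]
    calc (∫ ω, (max (C ((k+1)^2) ω) 0)^2 ∂μ) * ((k:ℝ)+1)^2
        ≤ (2 * ((k:ℝ)+1)^2) * ((k:ℝ)+1)^2 := by
          apply mul_le_mul_of_nonneg_right hb (le_of_lt hpos)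
      _ = 2 * (((k:ℝ)+1)^2)^2 := by ring
  have hsummable : Summable (fun k : ℕ => 2 / ((k:ℝ)+1)^2) := by
    have h1 : Summable (fun n : ℕ => 1 / (n:ℝ)^2) :=
      Real.summable_one_div_nat_pow.2 (by norm_num)
    have h2 := ((summable_nat_add_iff 1).2 h1).mul_left 2
    apply h2.congr
    intro n
    push_cast
    ring
  have htop : ∫⁻ ω, ∑' k, W k ω ∂μ ≠ ⊤ := by
    rw [MeasureTheory.lintegral_tsum (fun k => (hWm k).aemeasurable)]
    apply ne_top_of_le_ne_top _ (ENNReal.tsum_le_tsum hWint)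
    rw [← ENNReal.ofReal_tsum_of_nonneg (fun k => by positivity) hsummable]
    exact ENNReal.ofReal_ne_top
  have haesum : ∀ᵐ ω ∂μ, ∑' k, W k ω < ⊤ :=
    MeasureTheory.ae_lt_top (Measurable.ennreal_tsum hWm) htop
  filter_upwards [haesum] with ω hs
  -- convergence along squares
  have htend0 : Filter.Tendsto (fun k => W k ω) Filter.atTop (nhds 0) :=
    ENNReal.tendsto_atTop_zero_of_tsum_ne_top hs.ne
  have hreal : Filter.Tendsto (fun k => (q k ω)^2) Filter.atTop (nhds 0) := by
    have h := (ENNReal.tendsto_toReal (by simp : (0:ENNReal) ≠ ⊤)).comp htend0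
    have heq : (fun k => (W k ω).toReal) = fun k => (q k ω)^2 :=
      funext fun k => ENNReal.toReal_ofReal (sq_nonneg _)
    rw [Function.comp_def, heq] at h
    simpa using h
  have hqt : Filter.Tendsto (fun k => q k ω) Filter.atTop (nhds 0) := by
    have h := (Real.continuous_sqrt.tendsto 0).comp hreal
    have heq : (fun k => Real.sqrt ((q k ω)^2)) = fun k => q k ω :=
      funext fun k => Real.sqrt_sq (hq0 k ω)
    rw [Function.comp_def, heq] at h
    simpa using h
  -- step bound along blocks
  have hdiff : ∀ n d : ℕ, C (n+d) ω ≤ C n ω + d := by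
    intro n d
    induction d with
    | zero => simp
    | succ d ihd =>
      have h1 := (abs_le.1 (hstep (n+d) ω)).2
      push_cast
      push_cast at ihd
      have : n + (d+1) = (n+d) + 1 := by ring
      rw [this]
      linarith
  -- the squeezing function
  set g : ℕ → ℝ := fun k => max (C (k^2) ω) 0 / ((k:ℝ))^2 + 2/(k:ℝ) with hg
  have hgq : (fun k => g (k+1)) = fun k => q k ω + 2/((k:ℝ)+1) := by
    funext k
    simp only [hg, hq]
    push_cast
    ring_nf
  have hgt : Filter.Tendsto g Filter.atTop (nhds 0) := by
    rw [← Filter.tendsto_add_atTop_iff_nat 1, hgq]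
    have h2k : Filter.Tendsto (fun k : ℕ => 2/((k:ℝ)+1)) Filter.atTop (nhds 0) := by
      have := (tendsto_one_div_add_atTop_nhds_zero_nat (𝕜 := ℝ)).const_mul 2
      simpa [div_eq_mul_inv] using this
    simpa using hqt.add h2k
  have hcomp : Filter.Tendsto (fun M => g (Nat.sqrt M)) Filter.atTop (nhds 0) :=
    hgt.comp nat_sqrt_atTop
  apply squeeze_zero' (Filter.Eventually.of_forall fun M =>
    div_nonneg (le_max_right _ _) (Nat.cast_nonneg M)) _ hcomp
  filter_upwards [Filter.eventually_ge_atTop 1] with M hM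
  set k := Nat.sqrt M with hk
  have hk1 : 1 ≤ k := Nat.sqrt_pos.2 hM
  have hk2 : k^2 ≤ M := Nat.sqrt_le' M
  have hk3 : M ≤ k^2 + 2*k := by
    have := Nat.lt_succ_sqrt M
    nlinarith [this]
  obtain ⟨d, hd⟩ := Nat.exists_eq_add_of_le hk2
  have hdle : d ≤ 2*k := by omega
  have hC : C M ω ≤ C (k^2) ω + 2*(k:ℝ) := by
    rw [hd]
    calc C (k^2 + d) ω ≤ C (k^2) ω + d := hdiff (k^2) d
      _ ≤ C (k^2) ω + 2*(k:ℝ) := by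
          have : (d:ℝ) ≤ 2*(k:ℝ) := by exact_mod_cast hdle
          linarith
  have hmax : max (C M ω) 0 ≤ max (C (k^2) ω) 0 + 2*(k:ℝ) := by
    apply max_le (hC.trans (by linarith [le_max_left (C (k^2) ω) 0]))
    positivity
  have hMpos : (0:ℝ) < (M:ℝ) := by exact_mod_cast hM
  have hkpos : (0:ℝ) < (k:ℝ) := by exact_mod_cast hk1
  have hle2 : ((k:ℝ))^2 ≤ (M:ℝ) := by exact_mod_cast hk2
  calc max (C M ω) 0 / (M:ℝ)
      ≤ (max (C (k^2) ω) 0 + 2*(k:ℝ)) / (M:ℝ) := by gcongr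
    _ ≤ (max (C (k^2) ω) 0 + 2*(k:ℝ)) / ((k:ℝ))^2 := by
        gcongr <;> positivity
    _ = g k := by
        rw [hg]
        dsimp only
        rw [add_div]
        congr 1
        rw [sq]
        rw [mul_div_mul_right 2 (k:ℝ) (ne_of_gt hkpos)]
end CE
namespace CE
section Main
variable {Ω : Type} [MeasurableSpace Ω] (play : ℕ → Ω → Bool × Bool)
  (μ : MeasureTheory.Measure Ω) [MeasureTheory.IsProbabilityMeasure μ]
  (hm : ∀ s, Measurable (play s))
include hm

lemma meas_C1 (t : ℕ) : Measurable (C1 play t) := by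
  have heq : C1 play t = fun ω => gTB (fun s : Fin t => play s.1 ω) :=
    funext fun ω => C1_eq play t ω
  rw [heq]
  exact (Measurable.of_discrete (f := gTB)).comp
    (measurable_pi_lambda _ fun s => hm s.1)

lemma meas_C2 (t : ℕ) : Measurable (C2 play t) := by
  have heq : C2 play t = fun ω => gBT (fun s : Fin t => play s.1 ω) :=
    funext fun ω => C2_eq play t ω
  rw [heq]
  exact (Measurable.of_discrete (f := gBT)).comp
    (measurable_pi_lambda _ fun s => hm s.1)

lemma int_sq_C1 (t : ℕ) :
    MeasureTheory.Integrable (fun ω => (max (C1 play t ω) 0)^2) μ := by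
  have heq : (fun ω => (max (C1 play t ω) 0)^2)
      = fun ω => (max (gTB (fun s : Fin t => play s.1 ω)) 0)^2 :=
    funext fun ω => by rw [C1_eq]
  rw [heq]
  exact int_comp play μ t hm (fun q => (max (gTB q.1) 0)^2)

lemma int_sq_C2 (t : ℕ) :
    MeasureTheory.Integrable (fun ω => (max (C2 play t ω) 0)^2) μ := by
  have heq : (fun ω => (max (C2 play t ω) 0)^2)
      = fun ω => (max (gBT (fun s : Fin t => play s.1 ω)) 0)^2 :=
    funext fun ω => by rw [C2_eq]
  rw [heq]
  exact int_comp play μ t hm (fun q => (max (gBT q.1) 0)^2)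

lemma bound_C1 (hF : Follows1 μ play P1) (t : ℕ) :
    ∫ ω, (max (C1 play t ω) 0)^2 ∂μ ≤ 2 * t := by
  refine le_trans ?_ (int_Zfn_le play μ hm hF t)
  apply MeasureTheory.integral_mono (int_sq_C1 play μ hm t)
  · have heq : Zfn play t = fun ω =>
        (max (gTB (fun s : Fin t => play s.1 ω)) 0)^2 +
        (max (gBT (fun s : Fin t => play s.1 ω)) 0)^2 := by
      funext ω; rw [Zfn, C1_eq, C2_eq]
    rw [heq]
    exact int_comp play μ t hm (fun q => (max (gTB q.1) 0)^2 + (max (gBT q.1) 0)^2)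
  · intro ω
    have : (0:ℝ) ≤ (max (C2 play t ω) 0)^2 := sq_nonneg _
    simp only [Zfn]
    linarith

lemma bound_C2 (hF : Follows1 μ play P1) (t : ℕ) :
    ∫ ω, (max (C2 play t ω) 0)^2 ∂μ ≤ 2 * t := by
  refine le_trans ?_ (int_Zfn_le play μ hm hF t)
  apply MeasureTheory.integral_mono (int_sq_C2 play μ hm t)
  · have heq : Zfn play t = fun ω =>
        (max (gTB (fun s : Fin t => play s.1 ω)) 0)^2 +
        (max (gBT (fun s : Fin t => play s.1 ω)) 0)^2 := by
      funext ω; rw [Zfn, C1_eq, C2_eq]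
    rw [heq]
    exact int_comp play μ t hm (fun q => (max (gTB q.1) 0)^2 + (max (gBT q.1) 0)^2)
  · intro ω
    have : (0:ℝ) ≤ (max (C1 play t ω) 0)^2 := sq_nonneg _
    simp only [Zfn]
    linarith

lemma main1 (hF : Follows1 μ play P1) :
    ∀ᵐ ω ∂μ,
      Filter.Tendsto (fun M : ℕ => max (C1 play M ω) 0 / M) Filter.atTop (nhds 0) ∧
      Filter.Tendsto (fun M : ℕ => max (C2 play M ω) 0 / M) Filter.atTop (nhds 0) := by
  have h1 := as_conv μ (C1 play) (meas_C1 play hm) (int_sq_C1 play μ hm)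
    (fun t ω => by
      have e1 : C1 play (t+1) ω = C1 play t ω + inc1 (play t ω) :=
        Finset.sum_range_succ _ _
      rw [e1]; simpa using abs_inc1 (play t ω))
    (bound_C1 play μ hm hF)
  have h2 := as_conv μ (C2 play) (meas_C2 play hm) (int_sq_C2 play μ hm)
    (fun t ω => by
      have e2 : C2 play (t+1) ω = C2 play t ω + inc2 (play t ω) :=
        Finset.sum_range_succ _ _
      rw [e2]; simpa using abs_inc2 (play t ω))
    (bound_C2 play μ hm hF)
  filter_upwards [h1, h2] with ω hω1 hω2
  exact ⟨hω1, hω2⟩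

end Main

lemma noRegret1 : NoRegret1 P1 := by
  intro Ω mΩ μ hμ play hm hF b
  haveI := hμ
  filter_upwards [main1 play μ hm hF] with ω hω
  rcases hω with ⟨h1, h2⟩
  cases b
  · -- b = false : regret sum is C1
    have hsum : ∀ M : ℕ, (∑ t ∈ Finset.range M,
        (uL false (play t ω).2 - uL (play t ω).1 (play t ω).2)) = C1 play M ω := by
      intro M
      apply Finset.sum_congr rfl
      intro t _
      rcases hx : play t ω with ⟨x, y⟩
      cases x <;> cases y <;> simp [uL, inc1, hx]
    have hfun : (fun M : ℕ => max ((∑ t ∈ Finset.range M,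
        (uL false (play t ω).2 - uL (play t ω).1 (play t ω).2)) / M) 0)
        = fun M : ℕ => max (C1 play M ω) 0 / M := by
      funext M
      rw [hsum M, max_div_zero _ (Nat.cast_nonneg M)]
    rw [hfun]
    exact h1
  · have hsum : ∀ M : ℕ, (∑ t ∈ Finset.range M,
        (uL true (play t ω).2 - uL (play t ω).1 (play t ω).2)) = C2 play M ω := by
      intro M
      apply Finset.sum_congr rfl
      intro t _
      rcases hx : play t ω with ⟨x, y⟩
      cases x <;> cases y <;> simp [uL, inc2, hx]
    have hfun : (fun M : ℕ => max ((∑ t ∈ Finset.range M,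
        (uL true (play t ω).2 - uL (play t ω).1 (play t ω).2)) / M) 0)
        = fun M : ℕ => max (C2 play M ω) 0 / M := by
      funext M
      rw [hsum M, max_div_zero _ (Nat.cast_nonneg M)]
    rw [hfun]
    exact h2

end CE
namespace CE

lemma uL_comm (a b : Bool) : uL a b = uL b a := by
  cases a <;> cases b <;> simp [uL]

lemma noRegret2 : NoRegret2 P2 := by
  intro Ω mΩ μ hμ play hm hF b
  haveI := hμ
  set play' : ℕ → Ω → Bool × Bool := fun t ω => ((play t ω).2, (play t ω).1) with hp
  have hm' : ∀ t, Measurable (play' t) := fun t => ((hm t).snd).prodMk ((hm t).fst)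
  have hF' : Follows1 μ play' P1 := by
    intro t f
    exact hF t (fun h x => f (fun m => ((h m).2, (h m).1)) x)
  have h := noRegret1 Ω mΩ μ hμ play' hm' hF' b
  filter_upwards [h] with ω hω
  have hfun : (fun M : ℕ => max ((∑ t ∈ Finset.range M,
      (uL (play t ω).1 b - uL (play t ω).1 (play t ω).2)) / M) 0)
      = fun M : ℕ => max ((∑ t ∈ Finset.range M,
      (uL b (play' t ω).2 - uL (play' t ω).1 (play' t ω).2)) / M) 0 := by
    funext M
    congr 1
    congr 1
    apply Finset.sum_congr rfl
    intro t _
    rw [hp]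
    dsimp only
    rw [uL_comm b (play t ω).1, uL_comm (play t ω).2 (play t ω).1]
  rw [hfun]
  exact hω

section TT
variable {Ω : Type} [MeasurableSpace Ω] (play : ℕ → Ω → Bool × Bool)
  (μ : MeasureTheory.Measure Ω) [MeasureTheory.IsProbabilityMeasure μ]
  (hm : ∀ s, Measurable (play s))
include hm

lemma P1_constTT (t : ℕ) : P1 t (fun _ : Fin t => ((true : Bool), (true : Bool))) = 1 := by
  have hTB : rTB (fun _ : Fin t => ((true : Bool), (true : Bool))) = -(t:ℝ)/t := by
    simp [rTB]
  have hBT : rBT (fun _ : Fin t => ((true : Bool), (true : Bool))) = 0 := by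
    simp [rBT]
  rw [P1, hTB, hBT]
  have h1 : -(t:ℝ)/t ≤ 0 := div_nonpos_iff.2 (Or.inr ⟨by simp, Nat.cast_nonneg t⟩)
  rw [max_eq_right h1]
  simp

lemma P2_constTT (t : ℕ) : P2 t (fun _ : Fin t => ((true : Bool), (true : Bool))) = 1 := by
  have hLR : rLR (fun _ : Fin t => ((true : Bool), (true : Bool))) = -(t:ℝ)/t := by
    simp [rLR]
  have hRL : rRL (fun _ : Fin t => ((true : Bool), (true : Bool))) = 0 := by
    simp [rRL]
  rw [P2, hLR, hRL]
  have h1 : -(t:ℝ)/t ≤ 0 := div_nonpos_iff.2 (Or.inr ⟨by simp, Nat.cast_nonneg t⟩)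
  rw [max_eq_right h1]
  simp

lemma all_TT (hF1 : Follows1 μ play P1) (hF2 : Follows2 μ play P2) :
    ∀ t : ℕ, ∀ᵐ ω ∂μ, play t ω = (true, true) := by
  intro t
  induction t using Nat.strong_induction_on with
  | _ t ih =>
  have hhist : ∀ᵐ ω ∂μ, ∀ s : Fin t, play s.1 ω = (true, true) :=
    (MeasureTheory.ae_all_iff).2 fun s => ih s.1 s.2
  have hP1 : ∀ᵐ ω ∂μ, P1 t (fun s : Fin t => play s.1 ω) = 1 := by
    filter_upwards [hhist] with ω hω
    have : (fun s : Fin t => play s.1 ω) = fun _ => (true, true) :=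
      funext fun s => hω s
    rw [this, P1_constTT play hm]
  have hP2 : ∀ᵐ ω ∂μ, P2 t (fun s : Fin t => play s.1 ω) = 1 := by
    filter_upwards [hhist] with ω hω
    have : (fun s : Fin t => play s.1 ω) = fun _ => (true, true) :=
      funext fun s => hω s
    rw [this, P2_constTT play hm]
  -- first coordinate
  have hint1 : MeasureTheory.Integrable
      (fun ω => (if (play t ω).1 = true then (1:ℝ) else 0)) μ :=
    int_comp play μ t hm (fun q => if q.2.1 = true then (1:ℝ) else 0)
  have hi1 : ∫ ω, (if (play t ω).1 = true then (1:ℝ) else 0) ∂μ = 1 := by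
    have h := hF1 t (fun _ _ => 1)
    simp only [mul_one] at h
    rw [h]
    rw [MeasureTheory.integral_congr_ae (g := fun _ => (1:ℝ)) (by
      filter_upwards [hP1] with ω hω; simp [hω])]
    simp
  have hx : ∀ᵐ ω ∂μ, (play t ω).1 = true := by
    have hnn : 0 ≤ᵐ[μ] fun ω => 1 - (if (play t ω).1 = true then (1:ℝ) else 0) := by
      apply ae_of_all
      intro ω
      by_cases h : (play t ω).1 = true <;> simp [h]
    have hint : MeasureTheory.Integrable
        (fun ω => 1 - (if (play t ω).1 = true then (1:ℝ) else 0)) μ :=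
      (MeasureTheory.integrable_const 1).sub hint1
    have hzero : ∫ ω, (1 - (if (play t ω).1 = true then (1:ℝ) else 0)) ∂μ = 0 := by
      rw [MeasureTheory.integral_sub (MeasureTheory.integrable_const 1) hint1, hi1]
      simp
    have := (MeasureTheory.integral_eq_zero_iff_of_nonneg_ae hnn hint).1 hzero
    filter_upwards [this] with ω hω
    by_contra h
    simp only [Pi.zero_apply] at hω
    simp [h] at hω
  -- second coordinate
  have hint2 : MeasureTheory.Integrable
      (fun ω => (if (play t ω).2 = true then (1:ℝ) else 0)) μ :=
    int_comp play μ t hm (fun q => if q.2.2 = true then (1:ℝ) else 0)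
  have hi2 : ∫ ω, (if (play t ω).2 = true then (1:ℝ) else 0) ∂μ = 1 := by
    have h := hF2 t (fun _ _ => 1)
    simp only [mul_one] at h
    rw [h]
    rw [MeasureTheory.integral_congr_ae (g := fun _ => (1:ℝ)) (by
      filter_upwards [hP2] with ω hω; simp [hω])]
    simp
  have hy : ∀ᵐ ω ∂μ, (play t ω).2 = true := by
    have hnn : 0 ≤ᵐ[μ] fun ω => 1 - (if (play t ω).2 = true then (1:ℝ) else 0) := by
      apply ae_of_all
      intro ω
      by_cases h : (play t ω).2 = true <;> simp [h]
    have hint : MeasureTheory.Integrable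
        (fun ω => 1 - (if (play t ω).2 = true then (1:ℝ) else 0)) μ :=
      (MeasureTheory.integrable_const 1).sub hint2
    have hzero : ∫ ω, (1 - (if (play t ω).2 = true then (1:ℝ) else 0)) ∂μ = 0 := by
      rw [MeasureTheory.integral_sub (MeasureTheory.integrable_const 1) hint2, hi2]
      simp
    have := (MeasureTheory.integral_eq_zero_iff_of_nonneg_ae hnn hint).1 hzero
    filter_upwards [this] with ω hω
    by_contra h
    simp only [Pi.zero_apply] at hω
    simp [h] at hω
  filter_upwards [hx, hy] with ω h1 h2
  exact Prod.ext h1 h2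

end TT
end CE
/-- Counterexample: there exist no-regret strategies for the two learners of the
3-player game `u(T,L)=(1,1,0), u(T,R)=(0,0,0), u(B,L)=(0,0,-1), u(B,R)=(1,1,1)`
(the optimizer, player 3, has a single action) such that the optimizer's expected
cumulative utility is `0` at every horizon, while the pure optimistic Stackelberg
value of the game is `1 > 0`. -/
theorem optimizer_below_stackelberg_value :
    NoRegret1 P1 ∧ NoRegret2 P2 ∧
      (∀ (Ω : Type) (_ : MeasurableSpace Ω) (μ : Measure Ω),
        IsProbabilityMeasure μ →
        ∀ play : ℕ → Ω → Bool × Bool, (∀ t, Measurable (play t)) →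
          Follows1 μ play P1 → Follows2 μ play P2 →
          ∀ M : ℕ, ∫ ω, (∑ t ∈ Finset.range M, u3 (play t ω)) ∂μ = 0) ∧
      -- the pure optimistic Stackelberg value of the game equals 1
      IsGreatest {v | ∃ z : Bool × Bool,
          (∀ b : Bool, uL b z.2 ≤ uL z.1 z.2) ∧
          (∀ b : Bool, uL z.1 b ≤ uL z.1 z.2) ∧
          v = u3 z} 1 ∧
      (0 : ℝ) < 1 := by
  refine ⟨CE.noRegret1, CE.noRegret2, ?_, ?_, one_pos⟩
  · intro Ω mΩ μ hμ play hm hF1 hF2 M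
    haveI := hμ
    have hTT : ∀ᵐ ω ∂μ, ∀ t : Fin M, play t.1 ω = (true, true) :=
      MeasureTheory.ae_all_iff.2 fun t => CE.all_TT play μ hm hF1 hF2 t.1
    rw [MeasureTheory.integral_congr_ae (g := fun _ => (0:ℝ)) ?_]
    · simp
    · filter_upwards [hTT] with ω hω
      have : ∀ t ∈ Finset.range M, u3 (play t ω) = 0 := by
        intro t ht
        rw [hω ⟨t, Finset.mem_range.1 ht⟩]
        simp [u3]
      simp [Finset.sum_congr rfl this]
  · constructor
    · exact ⟨(false, false), fun b => by cases b <;> simp [uL],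
        fun b => by cases b <;> simp [uL], by simp [u3]⟩
    · rintro v ⟨⟨a, b⟩, -, -, rfl⟩
      cases a <;> cases b <;> norm_num [u3]
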